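/- Let G be a group with a proper length function and suppose for some r > 0, R > 0, ε > 0 that |B_{r+R}| ≤ (1+ε)|B_{r−R}|. Define for each x ∈ G the unit vector g(x) = √(χ_{B(x,r)} / |B_r|) ∈ ℓ²(G), where χ_{B(x,r)} is the characteristic function of the closed ball of radius r around x. Then d(x,y) ≤ R implies ‖g(x) − g(y)‖₂² ≤ ε. -/

import Mathlib

/-- If `|B_{r+R}| ≤ (1+ε)|B_{r−R}|` for a group `G` with proper length function
`l` (metric `d(x,y) = l(x⁻¹y)`), then the unit vectors
`g(x) = √(χ_{B(x,r)}/|B_r|) ∈ ℓ²(G)` satisfy `‖g(x) − g(y)‖₂² ≤ ε` whenever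
`d(x,y) ≤ R`. -/
theorem normalized_ball_vectors_close
    {G : Type*} [Group G] (l : G → ℝ)
    (h0 : ∀ x : G, l x = 0 ↔ x = 1)
    (hinv : ∀ x : G, l x⁻¹ = l x)
    (hsub : ∀ x y : G, l (x * y) ≤ l x + l y)
    (hproper : ∀ M : ℝ, {g : G | l g ≤ M}.Finite)
    (r R ε : ℝ) (hr : 0 < r) (hR : 0 < R) (hε : 0 < ε)
    (hball : ({g : G | l g ≤ r + R}.ncard : ℝ) ≤
      (1 + ε) * ({g : G | l g ≤ r - R}.ncard : ℝ)) :
    ∀ x y : G, l (x⁻¹ * y) ≤ R →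
      ∑' z : G,
        (Real.sqrt (Set.indicator {g : G | l (x⁻¹ * g) ≤ r} (fun _ => (1 : ℝ)) z /
            ({g : G | l g ≤ r}.ncard : ℝ)) -
         Real.sqrt (Set.indicator {g : G | l (y⁻¹ * g) ≤ r} (fun _ => (1 : ℝ)) z /
            ({g : G | l g ≤ r}.ncard : ℝ))) ^ 2 ≤ ε := by
  intro x y hxy
  have hl1 : l 1 = 0 := (h0 1).mpr rfl
  -- translation facts
  have htrans : ∀ (w : G) (ρ : ℝ),
      {g : G | l (w⁻¹ * g) ≤ ρ} = (fun g => w * g) '' {g : G | l g ≤ ρ} := by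
    intro w ρ
    ext g
    simp only [Set.mem_image, Set.mem_setOf_eq]
    constructor
    · intro h; exact ⟨w⁻¹ * g, h, by group⟩
    · rintro ⟨a, ha, rfl⟩; simpa using ha
  have hfin : ∀ (w : G) (ρ : ℝ), {g : G | l (w⁻¹ * g) ≤ ρ}.Finite := by
    intro w ρ; rw [htrans]; exact (hproper ρ).image _
  have hncard : ∀ (w : G) (ρ : ℝ),
      {g : G | l (w⁻¹ * g) ≤ ρ}.ncard = {g : G | l g ≤ ρ}.ncard := by
    intro w ρ; rw [htrans]
    exact Set.ncard_image_of_injective _ (mul_right_injective w)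
  set N : ℝ := ({g : G | l g ≤ r}.ncard : ℝ) with hNdef
  have hfinr : {g : G | l g ≤ r}.Finite := hproper r
  have hNpos : 0 < N := by
    have h1mem : (1:G) ∈ {g : G | l g ≤ r} := by
      simp [Set.mem_setOf_eq, hl1, hr.le]
    have h := (Set.ncard_pos hfinr).mpr ⟨1, h1mem⟩
    rw [hNdef]; exact_mod_cast h
  set Bx := {g : G | l (x⁻¹ * g) ≤ r} with hBx
  set By' := {g : G | l (y⁻¹ * g) ≤ r} with hBy'
  set S := (Bx \ By') ∪ (By' \ Bx) with hS
  have hyx : l (y⁻¹ * x) ≤ R := by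
    rw [show y⁻¹ * x = (x⁻¹ * y)⁻¹ by group, hinv]; exact hxy
  have hsub1 : {g : G | l (x⁻¹ * g) ≤ r - R} ⊆ Bx ∩ By' := by
    intro g hg
    simp only [Set.mem_setOf_eq] at hg
    constructor
    · show l (x⁻¹ * g) ≤ r; linarith
    · show l (y⁻¹ * g) ≤ r
      have h2 : y⁻¹ * g = (y⁻¹ * x) * (x⁻¹ * g) := by group
      rw [h2]
      calc l ((y⁻¹ * x) * (x⁻¹ * g)) ≤ l (y⁻¹ * x) + l (x⁻¹ * g) := hsub _ _
        _ ≤ R + (r - R) := add_le_add hyx hg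
        _ = r := by ring
  have hsub2 : Bx ∪ By' ⊆ {g : G | l (x⁻¹ * g) ≤ r + R} := by
    rintro g (hg | hg)
    · show l (x⁻¹ * g) ≤ r + R
      exact le_trans hg (by linarith)
    · show l (x⁻¹ * g) ≤ r + R
      have h2 : x⁻¹ * g = (x⁻¹ * y) * (y⁻¹ * g) := by group
      rw [h2]
      calc l ((x⁻¹ * y) * (y⁻¹ * g)) ≤ l (x⁻¹ * y) + l (y⁻¹ * g) := hsub _ _
        _ ≤ R + r := add_le_add hxy hg
        _ = r + R := by ring
  -- finiteness
  have hBxfin : Bx.Finite := hfin x r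
  have hByfin : By'.Finite := hfin y r
  have hSfin : S.Finite := (hBxfin.diff).union (hByfin.diff)
  have hCmfin : {g : G | l (x⁻¹ * g) ≤ r - R}.Finite := hfin x (r - R)
  have hCpfin : {g : G | l (x⁻¹ * g) ≤ r + R}.Finite := hfin x (r + R)
  -- disjointness of S and the small ball
  have hdj : Disjoint S {g : G | l (x⁻¹ * g) ≤ r - R} := by
    rw [Set.disjoint_left]
    rintro a (⟨ha1, ha2⟩ | ⟨ha1, ha2⟩) haC
    · exact ha2 (hsub1 haC).2
    · exact ha2 (hsub1 haC).1
  -- cardinality bound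
  have hcard : (S.ncard : ℝ) ≤ ε * N := by
    have hunion : (S ∪ {g : G | l (x⁻¹ * g) ≤ r - R}).ncard
        = S.ncard + {g : G | l (x⁻¹ * g) ≤ r - R}.ncard :=
      Set.ncard_union_eq hdj hSfin hCmfin
    have hsubU : S ∪ {g : G | l (x⁻¹ * g) ≤ r - R} ⊆ {g : G | l (x⁻¹ * g) ≤ r + R} := by
      apply Set.union_subset
      · refine Set.Subset.trans ?_ hsub2
        rintro a (⟨ha1, _⟩ | ⟨ha1, _⟩)
        · exact Or.inl ha1
        · exact Or.inr ha1
      · intro a ha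
        simp only [Set.mem_setOf_eq] at ha ⊢
        linarith
    have hle : S.ncard + {g : G | l (x⁻¹ * g) ≤ r - R}.ncard
        ≤ {g : G | l (x⁻¹ * g) ≤ r + R}.ncard := by
      rw [← hunion]; exact Set.ncard_le_ncard hsubU hCpfin
    have hleR : (S.ncard : ℝ) + ({g : G | l g ≤ r - R}.ncard : ℝ)
        ≤ ({g : G | l g ≤ r + R}.ncard : ℝ) := by
      rw [← hncard x (r - R), ← hncard x (r + R)]
      exact_mod_cast hle
    have hmN : ({g : G | l g ≤ r - R}.ncard : ℝ) ≤ N := by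
      have : {g : G | l g ≤ r - R} ⊆ {g : G | l g ≤ r} := by
        intro a ha; simp only [Set.mem_setOf_eq] at ha ⊢; linarith
      have h := Set.ncard_le_ncard this hfinr
      rw [hNdef]; exact_mod_cast h
    nlinarith [hε.le, hmN, hleR, hball]
  -- pointwise identity
  have hpt : ∀ z : G,
      (Real.sqrt (Bx.indicator (fun _ => (1:ℝ)) z / N) -
        Real.sqrt (By'.indicator (fun _ => (1:ℝ)) z / N)) ^ 2
      = S.indicator (fun _ => 1 / N) z := by
    intro z
    have hN1 : (0:ℝ) ≤ 1 / N := by positivity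
    by_cases hzx : z ∈ Bx <;> by_cases hzy : z ∈ By'
    · have hzS : z ∉ S := by
        rintro (⟨_, h2⟩ | ⟨_, h2⟩) <;> exact h2 (by assumption)
      rw [Set.indicator_of_mem hzx, Set.indicator_of_mem hzy,
        Set.indicator_of_notMem hzS]
      ring
    · have hzS : z ∈ S := Or.inl ⟨hzx, hzy⟩
      rw [Set.indicator_of_mem hzx, Set.indicator_of_notMem hzy,
        Set.indicator_of_mem hzS]
      rw [zero_div, Real.sqrt_zero, sub_zero, Real.sq_sqrt hN1]
    · have hzS : z ∈ S := Or.inr ⟨hzy, hzx⟩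
      rw [Set.indicator_of_notMem hzx, Set.indicator_of_mem hzy,
        Set.indicator_of_mem hzS]
      rw [zero_div, Real.sqrt_zero, zero_sub, neg_sq, Real.sq_sqrt hN1]
    · have hzS : z ∉ S := by
        rintro (⟨h1, _⟩ | ⟨h1, _⟩) <;> exact (by assumption : _ ∉ _) h1
      rw [Set.indicator_of_notMem hzx, Set.indicator_of_notMem hzy,
        Set.indicator_of_notMem hzS]
      simp
  calc ∑' z : G,
        (Real.sqrt (Bx.indicator (fun _ => (1:ℝ)) z / N) -
          Real.sqrt (By'.indicator (fun _ => (1:ℝ)) z / N)) ^ 2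
      = ∑' z : G, S.indicator (fun _ => 1 / N) z := tsum_congr hpt
    _ = ∑ z ∈ hSfin.toFinset, S.indicator (fun _ => 1 / N) z := by
        apply tsum_eq_sum
        intro z hz
        exact Set.indicator_of_notMem (by simpa using hz) _
    _ = (S.ncard : ℝ) * (1 / N) := by
        rw [Finset.sum_congr rfl (fun z hz =>
          Set.indicator_of_mem (hSfin.mem_toFinset.mp hz) _),
          Finset.sum_const, nsmul_eq_mul, Set.ncard_eq_toFinset_card _ hSfin]
    _ ≤ ε := by
        rw [mul_one_div, div_le_iff₀ hNpos]
        nlinarith [hcard, hNpos]
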